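/- arXiv:1102.3190 — 2 statements merged into one kernel-verified Lean document; each statement's English description precedes it below -/
import Mathlib

section
/- (Bernstein's inequality) Let P be a real polynomial of degree at most n. Then for every x in the open interval (−1, 1), |P'(x)| ≤ (n / √(1 − x²)) · sup_{t ∈ [−1,1]} |P(t)|. -/
open Polynomial Set

lemma natDegree_chebT_le (k : ℕ) : (Polynomial.Chebyshev.T ℝ (k : ℤ)).natDegree ≤ k := by
  induction k using Nat.twoStepInduction with
  | zero => simp [Polynomial.Chebyshev.T_zero]
  | one => simp [Polynomial.Chebyshev.T_one]
  | more k ih1 ih2 =>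
    have hcast : ((k + 2 : ℕ) : ℤ) = (k : ℤ) + 2 := by push_cast; ring
    rw [hcast, Polynomial.Chebyshev.T_add_two]
    refine le_trans (Polynomial.natDegree_sub_le _ _) (max_le ?_ (le_trans ih1 (by omega)))
    refine le_trans (Polynomial.natDegree_mul_le) ?_
    have h1 : (2 * Polynomial.X : Polynomial ℝ).natDegree ≤ 1 := by compute_degree
    have h2 : (Polynomial.Chebyshev.T ℝ ((k:ℤ) + 1)).natDegree ≤ k + 1 := by
      have : ((k + 1 : ℕ) : ℤ) = (k : ℤ) + 1 := by push_cast; ring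
      rw [← this]; exact ih2
    omega

lemma natDegree_chebU_le (k : ℕ) : (Polynomial.Chebyshev.U ℝ (k : ℤ)).natDegree ≤ k := by
  induction k using Nat.twoStepInduction with
  | zero => simp [Polynomial.Chebyshev.U_zero]
  | one =>
    rw [show ((1:ℕ):ℤ) = 1 by norm_num, Polynomial.Chebyshev.U_one]
    compute_degree
  | more k ih1 ih2 =>
    have hcast : ((k + 2 : ℕ) : ℤ) = (k : ℤ) + 2 := by push_cast; ring
    rw [hcast, Polynomial.Chebyshev.U_add_two]
    refine le_trans (Polynomial.natDegree_sub_le _ _) (max_le ?_ (le_trans ih1 (by omega)))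
    refine le_trans (Polynomial.natDegree_mul_le) ?_
    have h1 : (2 * Polynomial.X : Polynomial ℝ).natDegree ≤ 1 := by compute_degree
    have h2 : (Polynomial.Chebyshev.U ℝ ((k:ℤ) + 1)).natDegree ≤ k + 1 := by
      have : ((k + 1 : ℕ) : ℤ) = (k : ℤ) + 1 := by push_cast; ring
      rw [← this]; exact ih2
    omega

lemma coskpi (k : ℕ) : Real.cos (k * Real.pi) = (-1 : ℝ)^k := by
  induction k with
  | zero => simp
  | succ k ih =>
    have : ((k+1 : ℕ) : ℝ) * Real.pi = k * Real.pi + Real.pi := by push_cast; ring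
    rw [this, Real.cos_add]
    simp [ih]
    ring


lemma zero_count (n : ℕ) (hn : 1 ≤ n) (A B : Polynomial ℝ)
    (hA : A.natDegree ≤ n) (hB : B.natDegree ≤ n - 1)
    (S : Finset ℝ) (hcard : 2*n+1 ≤ S.card)
    (hwin : ∀ a ∈ S, ∀ b ∈ S, |a - b| < 2*Real.pi)
    (hz : ∀ t ∈ S, A.eval (Real.cos t) + Real.sin t * B.eval (Real.cos t) = 0) :
    A = 0 ∧ B = 0 := by
  set R := A^2 - (1 - Polynomial.X^2) * B^2 with hRdef
  by_cases hR : R = 0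
  · have hAB : A^2 = (1 - Polynomial.X^2) * B^2 := by
      have := sub_eq_zero.mp hR; exact this
    have hB0 : B = 0 := by
      apply Polynomial.eq_zero_of_infinite_isRoot
      apply Set.Infinite.mono ?_ (Set.Ioi_infinite (1:ℝ))
      intro y hy
      have hy1 : (1:ℝ) < y := hy
      have h1 := congrArg (Polynomial.eval y) hAB
      simp only [Polynomial.eval_pow, Polynomial.eval_mul, Polynomial.eval_sub,
        Polynomial.eval_one, Polynomial.eval_X] at h1
      have hy2 : 1 - y^2 < 0 := by nlinarith
      have hBsq : B.eval y ^ 2 ≤ 0 := by nlinarith [sq_nonneg (A.eval y), sq_nonneg (B.eval y)]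
      have hB2 : B.eval y ^ 2 = 0 := le_antisymm hBsq (sq_nonneg _)
      exact pow_eq_zero_iff (two_ne_zero) |>.mp hB2
    have hA0 : A = 0 := by
      have h2 : A^2 = 0 := by rw [hAB, hB0]; ring
      exact pow_eq_zero_iff (by norm_num) |>.mp h2
    exact ⟨hA0, hB0⟩
  · exfalso
    have hroot : ∀ t ∈ S, R.IsRoot (Real.cos t) := by
      intro t ht
      have h1 := hz t ht
      have h2 : Real.sin t ^2 + Real.cos t ^2 = 1 := Real.sin_sq_add_cos_sq t
      simp only [Polynomial.IsRoot, hRdef, Polynomial.eval_sub, Polynomial.eval_mul,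
        Polynomial.eval_pow, Polynomial.eval_one, Polynomial.eval_X]
      linear_combination (A.eval (Real.cos t) - Real.sin t * B.eval (Real.cos t)) * h1
        + B.eval (Real.cos t) ^ 2 * h2
    have hpair : ∀ a ∈ S, ∀ b ∈ S, a ≠ b → Real.cos a = Real.cos b →
        Real.sin b = -Real.sin a ∧ Real.sin a ≠ 0 := by
      intro a ha b hb hab hcos
      have hsq : Real.sin b ^2 = Real.sin a ^2 := by
        linear_combination (-1 : ℝ) * Real.sin_sq_add_cos_sq a + Real.sin_sq_add_cos_sq b
          + (Real.cos a + Real.cos b) * hcos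
      have hne : Real.sin b ≠ Real.sin a := by
        intro heq
        have h1 : Real.cos (a - b) = 1 := by
          rw [Real.cos_sub, hcos, heq]; linear_combination Real.sin_sq_add_cos_sq b - hsq
        have h2 := abs_lt.mp (hwin a ha b hb)
        have h3 : a - b = 0 := by
          exact (Real.cos_eq_one_iff_of_lt_of_lt (by linarith) (by linarith)).mp h1
        exact hab (by linarith)
      have hopp : Real.sin b = -Real.sin a := by
        have h4 : (Real.sin b - Real.sin a)*(Real.sin b + Real.sin a) = 0 := by linear_combination hsq
        rcases mul_eq_zero.mp h4 with h|h
        · exact absurd (by linarith) hne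
        · linarith
      refine ⟨hopp, fun h0 => hne (by rw [hopp, h0, neg_zero])⟩
    have hfibercard : ∀ c ∈ S.image Real.cos,
        (S.filter (fun t => Real.cos t = c)).card ≤ R.rootMultiplicity c := by
      intro c hc
      obtain ⟨t₀, ht₀S, ht₀⟩ := Finset.mem_image.mp hc
      set F := S.filter (fun t => Real.cos t = c) with hF
      have hFsub : ∀ t ∈ F, t ∈ S ∧ Real.cos t = c := fun t ht => Finset.mem_filter.mp ht
      have hle2 : F.card ≤ 2 := by
        by_contra hgt
        push_neg at hgt
        obtain ⟨a, b, d, ha, hb, hd, hab, had, hbd⟩ := Finset.two_lt_card_iff.mp hgt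
        obtain ⟨haS, hac⟩ := hFsub a ha
        obtain ⟨hbS, hbc⟩ := hFsub b hb
        obtain ⟨hdS, hdc⟩ := hFsub d hd
        have p1 := hpair a haS b hbS hab (hac.trans hbc.symm)
        have p2 := hpair a haS d hdS had (hac.trans hdc.symm)
        have p3 := hpair b hbS d hdS hbd (hbc.trans hdc.symm)
        exact p1.2 (by linarith [p1.1, p2.1, p3.1])
      have hmult1 : 0 < R.rootMultiplicity c :=
        (Polynomial.rootMultiplicity_pos hR).mpr (ht₀ ▸ hroot t₀ ht₀S)
      have hFne : 0 < F.card := Finset.card_pos.mpr ⟨t₀, Finset.mem_filter.mpr ⟨ht₀S, ht₀⟩⟩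
      rcases le_or_gt F.card 1 with h1 | h1
      · omega
      · obtain ⟨a, ha, b, hb, hab⟩ := Finset.one_lt_card.mp h1
        obtain ⟨haS, hac⟩ := hFsub a ha
        obtain ⟨hbS, hbc⟩ := hFsub b hb
        obtain ⟨hopp, hne0⟩ := hpair a haS b hbS hab (hac.trans hbc.symm)
        have hza := hz a haS
        have hzb := hz b hbS
        rw [hac] at hza
        rw [hbc, hopp] at hzb
        have hBc : B.eval c = 0 := by
          have h5 : Real.sin a * B.eval c = 0 := by linarith
          exact (mul_eq_zero.mp h5).resolve_left hne0
        have hAc : A.eval c = 0 := by rw [hBc] at hza; linarith [hza]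
        have hdvd : (Polynomial.X - Polynomial.C c)^2 ∣ R := by
          have dA : (Polynomial.X - Polynomial.C c) ∣ A := Polynomial.dvd_iff_isRoot.mpr hAc
          have dB : (Polynomial.X - Polynomial.C c) ∣ B := Polynomial.dvd_iff_isRoot.mpr hBc
          exact dvd_sub (pow_dvd_pow_of_dvd dA 2) ((pow_dvd_pow_of_dvd dB 2).mul_left _)
        have := (Polynomial.le_rootMultiplicity_iff hR).mpr hdvd
        omega
    have hsum : S.card = ∑ c ∈ S.image Real.cos,
        (S.filter (fun t => Real.cos t = c)).card := Finset.card_eq_sum_card_image _ _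
    have hsum2 : ∑ c ∈ S.image Real.cos, (S.filter (fun t => Real.cos t = c)).card
        ≤ ∑ c ∈ S.image Real.cos, R.rootMultiplicity c := Finset.sum_le_sum hfibercard
    have hsub : S.image Real.cos ⊆ R.roots.toFinset := by
      intro c hc
      obtain ⟨t₀, ht₀S, ht₀⟩ := Finset.mem_image.mp hc
      rw [Multiset.mem_toFinset, Polynomial.mem_roots hR]
      exact ht₀ ▸ hroot t₀ ht₀S
    have hsum3 : ∑ c ∈ S.image Real.cos, R.rootMultiplicity c ≤ Multiset.card R.roots := by
      calc ∑ c ∈ S.image Real.cos, R.rootMultiplicity c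
          = ∑ c ∈ S.image Real.cos, R.roots.count c := by
            refine Finset.sum_congr rfl fun c _ => ?_
            rw [Polynomial.count_roots]
        _ ≤ ∑ c ∈ R.roots.toFinset, R.roots.count c :=
            Finset.sum_le_sum_of_subset hsub
        _ = Multiset.card R.roots := Multiset.toFinset_sum_count_eq _
    have hdeg : R.natDegree ≤ 2*n := by
      have d1 : (A^2).natDegree ≤ 2*n := by
        rw [Polynomial.natDegree_pow]; omega
      have d2 : ((1 - Polynomial.X^2 : Polynomial ℝ)*B^2).natDegree ≤ 2*n := by
        refine le_trans (Polynomial.natDegree_mul_le) ?_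
        have e1 : (1 - Polynomial.X^2 : Polynomial ℝ).natDegree ≤ 2 := by compute_degree
        have e2 : ((B:Polynomial ℝ)^2).natDegree = 2 * B.natDegree := Polynomial.natDegree_pow B 2
        omega
      exact le_trans (Polynomial.natDegree_sub_le _ _) (max_le d1 d2)
    have hcard2 := Polynomial.card_roots' R
    omega

set_option maxHeartbeats 2000000 in
lemma bernstein_key (n : ℕ) (hn : 1 ≤ n) (P : Polynomial ℝ) (hP : P.degree ≤ n) (M : ℝ)
    (hM : ∀ y ∈ Icc (-1:ℝ) 1, |P.eval y| ≤ M) (ψ : ℝ) :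
    P.derivative.eval (Real.cos ψ) * (-Real.sin ψ) ≤ n * M := by
  by_contra hcon
  push_neg at hcon
  set D := P.derivative.eval (Real.cos ψ) * (-Real.sin ψ) with hDdef
  have hM0 : 0 ≤ M := le_trans (abs_nonneg _) (hM 0 (by norm_num))
  have hnR : (0:ℝ) < n := by exact_mod_cast hn
  have hπ := Real.pi_pos
  have hDpos : 0 < D := lt_of_le_of_lt (by positivity) hcon
  set m : ℝ := (M + D / n) / 2 with hmdef
  have hMDn : M < D / n := (lt_div_iff₀ hnR).mpr (by linarith [hcon])
  have hMm : M < m := by rw [hmdef]; linarith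
  have hmD : m * n < D := by
    have : m < D / n := by rw [hmdef]; linarith
    calc m * n < (D/n) * n := by exact mul_lt_mul_of_pos_right this hnR
    _ = D := by field_simp
  have hm0 : 0 < m := lt_of_le_of_lt hM0 hMm
  have hfb : ∀ θ:ℝ, |P.eval (Real.cos θ)| ≤ M :=
    fun θ => hM _ ⟨Real.neg_one_le_cos θ, Real.cos_le_one θ⟩
  set β := Real.arcsin (P.eval (Real.cos ψ) / m) with hβdef
  have hratio : |P.eval (Real.cos ψ) / m| < 1 := by
    rw [abs_div, abs_of_pos hm0]
    exact (div_lt_one hm0).mpr (lt_of_le_of_lt (hfb ψ) hMm)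
  have hratio' := abs_lt.mp hratio
  have hβ1 : -(Real.pi/2) < β := Real.neg_pi_div_two_lt_arcsin.mpr hratio'.1
  have hβ2 : β < Real.pi/2 := Real.arcsin_lt_pi_div_two.mpr hratio'.2
  have hsinβ : Real.sin β = P.eval (Real.cos ψ) / m :=
    Real.sin_arcsin (by linarith [hratio'.1]) (le_of_lt hratio'.2)
  have hcosβ : Real.cos β ≤ 1 := Real.cos_le_one β
  set α := ψ - β / n with hαdef
  have hαψ : (n:ℝ) * ψ - n * α = β := by rw [hαdef]; field_simp; ring
  set g : ℝ → ℝ := fun θ => P.eval (Real.cos θ) - m * Real.sin (n * θ - n * α) with hgdef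
  have hcont : Continuous g := by
    apply Continuous.sub (P.continuous.comp Real.continuous_cos)
    exact continuous_const.mul (Real.continuous_sin.comp (by continuity))
  set D' := D - m * (Real.cos β * n) with hD'def
  have hderiv : HasDerivAt g D' ψ := by
    have h1 : HasDerivAt (fun θ:ℝ => P.eval (Real.cos θ)) D ψ := by
      have := (P.hasDerivAt (Real.cos ψ)).comp ψ (Real.hasDerivAt_cos ψ)
      simpa [hDdef, Function.comp_def] using this
    have h2 : HasDerivAt (fun θ:ℝ => (n:ℝ) * θ - n * α) (n:ℝ) ψ := by
      simpa using ((hasDerivAt_id ψ).const_mul (n:ℝ)).sub_const ((n:ℝ)*α)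
    have h3 : HasDerivAt (fun θ:ℝ => Real.sin ((n:ℝ)*θ - n*α))
        (Real.cos ((n:ℝ)*ψ - n*α) * n) ψ := (Real.hasDerivAt_sin _).comp ψ h2
    have h4 := h3.const_mul m
    rw [hαψ] at h4
    exact h1.sub h4
  have hD'pos : 0 < D' := by
    rw [hD'def]
    have : m * (Real.cos β * n) ≤ m * n := by
      have : Real.cos β * n ≤ n := by nlinarith
      nlinarith
    linarith
  have hgψ : g ψ = 0 := by
    rw [hgdef]
    simp only [hαψ, hsinβ]
    field_simp
    ring
  set θp : ℕ → ℝ := fun k => α + (2*(k:ℝ) - 1) * Real.pi / (2*n) with hθpdef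
  have h2n : (0:ℝ) < 2*n := by linarith
  have hθmono : StrictMono θp := by
    intro a b hab
    have hab' : (a:ℝ) < b := by exact_mod_cast hab
    simp only [hθpdef]
    apply (add_lt_add_iff_left α).mpr
    apply (div_lt_div_iff_of_pos_right h2n).mpr
    exact mul_lt_mul_of_pos_right (by linarith) hπ
  have hθψl : θp 0 < ψ := by
    have e0 : θp 0 = ψ - (β + Real.pi/2) / n := by
      simp only [hθpdef, hαdef]
      push_cast
      field_simp
      ring
    rw [e0]
    have h1 : 0 < (β + Real.pi/2) / n := div_pos (by linarith) hnR
    linarith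
  have hθψr : ψ < θp 1 := by
    have e1 : θp 1 = ψ + (Real.pi/2 - β) / n := by
      simp only [hθpdef, hαdef]
      push_cast
      field_simp
      ring
    rw [e1]
    have h1 : 0 < (Real.pi/2 - β) / n := div_pos (by linarith) hnR
    linarith
  -- value at alternation points
  have hsign : ∀ k : ℕ, g (θp k) = P.eval (Real.cos (θp k)) + m * (-1:ℝ)^k := by
    intro k
    have harg : (n:ℝ) * θp k - n*α = (k:ℝ)*Real.pi - Real.pi/2 := by
      simp only [hθpdef]
      field_simp
      ring
    simp only [hgdef, harg]
    rw [Real.sin_sub, Real.sin_pi_div_two, Real.cos_pi_div_two, Real.sin_nat_mul_pi, coskpi]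
    ring
  have hpos : ∀ k : ℕ, Even k → 0 < g (θp k) := by
    intro k hk
    rw [hsign, hk.neg_one_pow]
    have := abs_le.mp (hfb (θp k))
    linarith [this.1]
  have hneg : ∀ k : ℕ, Odd k → g (θp k) < 0 := by
    intro k hk
    rw [hsign, hk.neg_one_pow]
    have := abs_le.mp (hfb (θp k))
    linarith [this.2]
  -- a point u just right of ψ with g u > 0
  have hu : ∃ u, u ∈ Ioo ψ (θp 1) ∧ 0 < g u := by
    have hslope : Filter.Tendsto (slope g ψ) (nhdsWithin ψ (Ioi ψ)) (nhds D') :=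
      (hasDerivAt_iff_tendsto_slope.mp hderiv).mono_left
        (nhdsWithin_mono ψ (fun y hy => Set.mem_compl_singleton_iff.mpr (ne_of_gt hy)))
    have h6 : ∀ᶠ u in nhdsWithin ψ (Ioi ψ), 0 < slope g ψ u :=
      hslope.eventually (eventually_gt_nhds hD'pos)
    have h7 : Ioo ψ (θp 1) ∈ nhdsWithin ψ (Ioi ψ) :=
      Ioo_mem_nhdsGT_of_mem ⟨le_refl _, hθψr⟩
    obtain ⟨u, hu1, hu2⟩ := (h6.and (Filter.eventually_of_mem h7 (fun x hx => hx))).exists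
    refine ⟨u, hu2, ?_⟩
    rw [slope_def_field, hgψ, sub_zero] at hu1
    rcases div_pos_iff.mp hu1 with ⟨h, _⟩ | ⟨_, h⟩
    · exact h
    · linarith [hu2.1]
  obtain ⟨u, ⟨huψ, huθ⟩, hgu⟩ := hu
  -- first extra zero
  obtain ⟨z₀, hz₀mem, hz₀⟩ :=
    intermediate_value_Ioo' (le_of_lt huθ) hcont.continuousOn
      (Set.mem_Ioo.mpr ⟨hneg 1 odd_one, hgu⟩)
  -- zeros between alternation points
  have hex : ∀ k : ℕ, ∃ z, 1 ≤ k → k ≤ 2*n - 1 →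
      z ∈ Ioo (θp k) (θp (k+1)) ∧ g z = 0 := by
    intro k
    by_cases hk : 1 ≤ k ∧ k ≤ 2*n-1
    · rcases Nat.even_or_odd k with he | ho
      · obtain ⟨z, hz, hz0⟩ := intermediate_value_Ioo' (le_of_lt (hθmono (lt_add_one k)))
          hcont.continuousOn (Set.mem_Ioo.mpr ⟨hneg (k+1) (Even.add_one he), hpos k he⟩)
        exact ⟨z, fun _ _ => ⟨hz, hz0⟩⟩
      · obtain ⟨z, hz, hz0⟩ := intermediate_value_Ioo (le_of_lt (hθmono (lt_add_one k)))
          hcont.continuousOn (Set.mem_Ioo.mpr ⟨hneg k ho, hpos (k+1) (Odd.add_one ho)⟩)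
        exact ⟨z, fun _ _ => ⟨hz, hz0⟩⟩
    · exact ⟨0, fun h1 h2 => absurd ⟨h1, h2⟩ hk⟩
  choose zf hzf using hex
  have hzmem : ∀ k ∈ Finset.Icc 1 (2*n-1), zf k ∈ Ioo (θp k) (θp (k+1)) := by
    intro k hk
    obtain ⟨h1, h2⟩ := Finset.mem_Icc.mp hk
    exact (hzf k h1 h2).1
  have hzzero : ∀ k ∈ Finset.Icc 1 (2*n-1), g (zf k) = 0 := by
    intro k hk
    obtain ⟨h1, h2⟩ := Finset.mem_Icc.mp hk
    exact (hzf k h1 h2).2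
  have hz₀l : ψ < z₀ := lt_trans huψ hz₀mem.1
  have hz₀r : z₀ < θp 1 := hz₀mem.2
  have hzfl : ∀ k ∈ Finset.Icc 1 (2*n-1), θp 1 ≤ θp k ∧ zf k < θp (k+1) ∧ θp k < zf k := by
    intro k hk
    obtain ⟨h1, h2⟩ := Finset.mem_Icc.mp hk
    exact ⟨hθmono.monotone h1, (hzmem k hk).2, (hzmem k hk).1⟩
  set S : Finset ℝ := insert ψ (insert z₀ ((Finset.Icc 1 (2*n-1)).image zf)) with hSdef
  have hinjOn : Set.InjOn zf (Finset.Icc 1 (2*n-1)) := by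
    intro a ha b hb hab
    by_contra hne
    rcases Nat.lt_or_ge a b with h | h
    · have h1 : zf a < θp (a+1) := (hzmem a ha).2
      have h2 : θp (a+1) ≤ θp b := hθmono.monotone (by omega)
      have h3 : θp b < zf b := (hzmem b hb).1
      linarith [hab ▸ (lt_of_lt_of_le h1 (le_of_lt (lt_of_le_of_lt h2 h3)))]
    · have hlt : b < a := by omega
      have h1 : zf b < θp (b+1) := (hzmem b hb).2
      have h2 : θp (b+1) ≤ θp a := hθmono.monotone (by omega)
      have h3 : θp a < zf a := (hzmem a ha).1
      linarith
  have hz₀ni : z₀ ∉ (Finset.Icc 1 (2*n-1)).image zf := by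
    intro hmem
    obtain ⟨k, hk, hkz⟩ := Finset.mem_image.mp hmem
    have := hzfl k hk
    linarith [this.1, this.2.2, hz₀r, hkz ▸ this.2.2]
  have hψni : ψ ∉ insert z₀ ((Finset.Icc 1 (2*n-1)).image zf) := by
    intro hmem
    rcases Finset.mem_insert.mp hmem with h | h
    · linarith [hz₀l, h]
    · obtain ⟨k, hk, hkz⟩ := Finset.mem_image.mp h
      have := hzfl k hk
      linarith [this.1, this.2.2, hθψr, hkz]
  have hScard : S.card = 2*n+1 := by
    rw [hSdef, Finset.card_insert_of_notMem hψni, Finset.card_insert_of_notMem hz₀ni,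
      Finset.card_image_of_injOn hinjOn, Nat.card_Icc]
    omega
  have hθtop : θp (2*n) < ψ + 2*Real.pi := by
    have : θp (2*n) = θp 0 + 2*Real.pi := by
      simp only [hθpdef]
      push_cast
      field_simp
      ring
    rw [this]
    linarith [hθψl]
  have hwin0 : ∀ t ∈ S, ψ ≤ t ∧ t < ψ + 2*Real.pi := by
    intro t ht
    rw [hSdef] at ht
    rcases Finset.mem_insert.mp ht with rfl | ht
    · exact ⟨le_refl _, by linarith⟩
    rcases Finset.mem_insert.mp ht with rfl | ht
    · constructor
      · linarith
      · have : θp 1 ≤ θp (2*n) := hθmono.monotone (by omega)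
        linarith
    · obtain ⟨k, hk, rfl⟩ := Finset.mem_image.mp ht
      obtain ⟨ha, hb, hc⟩ := hzfl k hk
      have h1 : θp (k+1) ≤ θp (2*n) := by
        apply hθmono.monotone
        have := (Finset.mem_Icc.mp hk).2
        omega
      exact ⟨by linarith, by linarith⟩
  have hSzero : ∀ t ∈ S, g t = 0 := by
    intro t ht
    rw [hSdef] at ht
    rcases Finset.mem_insert.mp ht with rfl | ht
    · exact hgψ
    rcases Finset.mem_insert.mp ht with rfl | ht
    · exact hz₀
    · obtain ⟨k, hk, rfl⟩ := Finset.mem_image.mp ht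
      exact hzzero k hk
  -- polynomials A and B
  set A : Polynomial ℝ := P + Polynomial.C (m * Real.sin (n*α)) * Polynomial.Chebyshev.T ℝ (n:ℤ)
    with hAdef
  set B : Polynomial ℝ :=
    -(Polynomial.C (m * Real.cos (n*α)) * Polynomial.Chebyshev.U ℝ ((n-1 : ℕ) : ℤ)) with hBdef
  have heval : ∀ t : ℝ, g t = A.eval (Real.cos t) + Real.sin t * B.eval (Real.cos t) := by
    intro t
    have hT := Polynomial.Chebyshev.T_real_cos t (n:ℤ)
    have hU := Polynomial.Chebyshev.U_real_cos t ((n-1:ℕ):ℤ)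
    have hcast : (((n-1:ℕ):ℤ):ℝ) + 1 = (n:ℝ) := by
      push_cast [Nat.cast_sub hn]
      ring
    rw [hcast] at hU
    have hTr : (Polynomial.Chebyshev.T ℝ (n:ℤ)).eval (Real.cos t) = Real.cos ((n:ℝ)*t) := by
      rw [hT]; norm_num
    simp only [hgdef, hAdef, hBdef, Polynomial.eval_add, Polynomial.eval_neg,
      Polynomial.eval_mul, Polynomial.eval_C, hTr]
    rw [Real.sin_sub]
    have : Real.sin t * (m * Real.cos ((n:ℝ)*α) *
        (Polynomial.Chebyshev.U ℝ ((n-1:ℕ):ℤ)).eval (Real.cos t)) =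
        m * Real.cos ((n:ℝ)*α) * Real.sin ((n:ℝ)*t) := by
      rw [← hU]; ring
    nlinarith [this]
  have hAdeg : A.natDegree ≤ n := by
    rw [hAdef]
    refine le_trans (Polynomial.natDegree_add_le _ _) (max_le ?_ ?_)
    · exact Polynomial.natDegree_le_iff_degree_le.mpr hP
    · refine le_trans (Polynomial.natDegree_mul_le) ?_
      have h1 : (Polynomial.C (m * Real.sin ((n:ℝ)*α))).natDegree = 0 := Polynomial.natDegree_C _
      have h2 := natDegree_chebT_le n
      omega
  have hBdeg : B.natDegree ≤ n - 1 := by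
    rw [hBdef, Polynomial.natDegree_neg]
    refine le_trans (Polynomial.natDegree_mul_le) ?_
    have h1 : (Polynomial.C (m * Real.cos ((n:ℝ)*α))).natDegree = 0 := Polynomial.natDegree_C _
    have h2 := natDegree_chebU_le (n-1)
    omega
  obtain ⟨hA0, hB0⟩ := zero_count n hn A B hAdeg hBdeg S (by omega)
    (fun a ha b hb => by
      obtain ⟨ha1, ha2⟩ := hwin0 a ha
      obtain ⟨hb1, hb2⟩ := hwin0 b hb
      rw [abs_sub_lt_iff]
      constructor <;> linarith)
    (fun t ht => by rw [← heval t]; exact hSzero t ht)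
  have hgzero : g = fun _ => (0:ℝ) := by
    funext t
    rw [heval t, hA0, hB0]
    simp
  have : D' = 0 := by
    have h0 : HasDerivAt (fun _ : ℝ => (0:ℝ)) 0 ψ := hasDerivAt_const ψ 0
    exact (hgzero ▸ hderiv).unique h0
  linarith


/-- **Bernstein's inequality.** If `P` is a real polynomial of degree at most `n`, then for
every `x ∈ (-1, 1)`, `|P'(x)| ≤ (n / √(1 - x²)) · sup_{t ∈ [-1,1]} |P(t)|`. -/
theorem bernstein_inequality (n : ℕ) (P : Polynomial ℝ) (hP : P.degree ≤ n)
    (x : ℝ) (hx : x ∈ Ioo (-1 : ℝ) 1) :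
    |P.derivative.eval x| ≤
      ((n : ℝ) / Real.sqrt (1 - x ^ 2)) * ⨆ t : Icc (-1 : ℝ) 1, |P.eval (t : ℝ)| := by
  obtain ⟨hx1, hx2⟩ := hx
  rcases Nat.eq_zero_or_pos n with rfl | hn
  · have hPC := Polynomial.eq_C_of_degree_le_zero (by simpa using hP)
    rw [hPC]
    simp
  · set M := ⨆ t : Icc (-1 : ℝ) 1, |P.eval (t : ℝ)| with hMdef
    have hbdd : BddAbove (Set.range fun t : Icc (-1:ℝ) 1 => |P.eval (t:ℝ)|) := by
      have hre : (Set.range fun t : Icc (-1:ℝ) 1 => |P.eval (t:ℝ)|) =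
          (fun y => |P.eval y|) '' (Icc (-1:ℝ) 1) := by
        ext v
        constructor
        · rintro ⟨⟨y, hy⟩, rfl⟩
          exact ⟨y, hy, rfl⟩
        · rintro ⟨y, hy, rfl⟩
          exact ⟨⟨y, hy⟩, rfl⟩
      rw [hre]
      exact IsCompact.bddAbove_image isCompact_Icc
        ((P.continuous.abs).continuousOn)
    have hMb : ∀ y ∈ Icc (-1:ℝ) 1, |P.eval y| ≤ M := fun y hy => le_ciSup hbdd ⟨y, hy⟩
    set ψ := Real.arccos x with hψdef
    have hcosψ : Real.cos ψ = x := Real.cos_arccos (by linarith) (by linarith)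
    have hs : Real.sin ψ = Real.sqrt (1 - x^2) := by
      rw [hψdef, Real.sin_arccos]
    have hspos : 0 < Real.sqrt (1 - x^2) := Real.sqrt_pos.mpr (by nlinarith)
    have h1 := bernstein_key n hn P hP M hMb ψ
    have h2 := bernstein_key n hn (-P) (by simpa using hP) M
      (fun y hy => by simpa using hMb y hy) ψ
    have h2' : -(P.derivative.eval (Real.cos ψ) * (-Real.sin ψ)) ≤ n * M := by
      simpa using h2
    have habs : |P.derivative.eval (Real.cos ψ) * (-Real.sin ψ)| ≤ n * M :=
      abs_le.mpr ⟨by linarith, h1⟩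
    rw [hcosψ, abs_mul, abs_neg, hs, abs_of_pos hspos] at habs
    rw [div_mul_eq_mul_div, le_div_iff₀ hspos]
    exact habs
end

section
/- (L² inverse inequality) Let P be a real polynomial of degree at most n. Then (∫_{−1}^{1} P'(x)² dx)^{1/2} ≤ √3 · n² · (∫_{−1}^{1} P(x)² dx)^{1/2}. -/
open Polynomial Set MeasureTheory intervalIntegral

namespace L2Inv

noncomputable def J (p : Polynomial ℝ) : ℝ := ∫ x in (-1:ℝ)..1, p.eval x

lemma contEval (p : Polynomial ℝ) : Continuous fun x : ℝ => p.eval x := p.continuous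

lemma intInt (p : Polynomial ℝ) : IntervalIntegrable (fun x => p.eval x) volume (-1) 1 :=
  (contEval p).intervalIntegrable _ _

lemma J_add (p q : Polynomial ℝ) : J (p + q) = J p + J q := by
  simp only [J, eval_add]
  exact intervalIntegral.integral_add (intInt p) (intInt q)

lemma J_smul (a : ℝ) (p : Polynomial ℝ) : J (C a * p) = a * J p := by
  simp only [J, eval_mul, eval_C]
  exact intervalIntegral.integral_const_mul a _

lemma J_ftc (p : Polynomial ℝ) : J (derivative p) = p.eval 1 - p.eval (-1) := by
  unfold J
  exact intervalIntegral.integral_eq_sub_of_hasDerivAt (fun x _ => p.hasDerivAt x)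
    (intInt (derivative p))

lemma J_ibp (p q : Polynomial ℝ) : J (p * derivative q) =
    p.eval 1 * q.eval 1 - p.eval (-1) * q.eval (-1) - J (derivative p * q) := by
  have h := J_ftc (p * q)
  rw [derivative_mul, J_add] at h
  simp only [eval_mul] at h
  linarith




lemma dvd_iter (c : ℝ) : ∀ (j m : ℕ) (h : Polynomial ℝ),
    (X - C c)^m ∣ derivative^[j] ((X - C c)^(m+j) * h) := by
  intro j
  induction j with
  | zero => intro m h; exact Dvd.intro h rfl
  | succ j ih =>
    intro m h
    rw [Function.iterate_succ_apply]
    have : derivative ((X - C c)^(m+(j+1)) * h) =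
        (X - C c)^(m+j) * ((C ((m:ℝ)+j+1)) * h + (X - C c) * derivative h) := by
      rw [derivative_mul, derivative_pow, derivative_X_sub_C]
      have e : m + (j+1) - 1 = m + j := by omega
      rw [e]
      push_cast
      ring
    rw [this]
    exact ih m _

lemma vanish (k j : ℕ) (hj : j < k) :
    (derivative^[j] ((X^2 - 1 : Polynomial ℝ)^k)).eval 1 = 0 ∧
    (derivative^[j] ((X^2 - 1 : Polynomial ℝ)^k)).eval (-1) = 0 := by
  have h1 : (X^2 - 1 : Polynomial ℝ)^k = (X - C 1)^((k-j)+j) * (X - C (-1))^k := by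
    rw [Nat.sub_add_cancel hj.le, ← mul_pow]
    congr 1
    simp [C_1]
    ring
  constructor
  · obtain ⟨u, hu⟩ := dvd_iter 1 j (k - j) ((X - C (-1))^k)
    rw [h1, hu]
    have : (0:ℕ) < k - j := Nat.sub_pos_of_lt hj
    simp [zero_pow this.ne']
  · obtain ⟨u, hu⟩ := dvd_iter (-1) j (k - j) ((X - C 1)^k)
    have h2 : (X^2 - 1 : Polynomial ℝ)^k = (X - C (-1))^((k-j)+j) * (X - C 1)^k := by
      rw [Nat.sub_add_cancel hj.le, ← mul_pow]
      congr 1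
      simp [C_1]
      ring
    rw [h2, hu]
    have : (0:ℕ) < k - j := Nat.sub_pos_of_lt hj
    simp [zero_pow this.ne']

lemma J_iter : ∀ (k : ℕ) (q g : Polynomial ℝ),
    (∀ j < k, (derivative^[j] g).eval 1 = 0 ∧ (derivative^[j] g).eval (-1) = 0) →
    J (q * derivative^[k] g) = (-1)^k * J (derivative^[k] q * g) := by
  intro k
  induction k with
  | zero => intro q g _; simp
  | succ k ih =>
    intro q g hb
    rw [Function.iterate_succ_apply']
    have h1 := J_ibp q (derivative^[k] g)
    have hv := hb k (Nat.lt_succ_self k)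
    rw [hv.1, hv.2] at h1
    rw [h1, ih (derivative q) g (fun j hj => hb j (hj.trans (Nat.lt_succ_self k))),
      ← Function.iterate_succ_apply]
    ring

noncomputable def R (k : ℕ) : Polynomial ℝ := derivative^[k] ((X^2 - 1)^k)

lemma orth (k : ℕ) (q : Polynomial ℝ) (hq : q.degree < k) : J (q * R k) = 0 := by
  have hD : derivative^[k] q = 0 := by
    rcases eq_or_ne q 0 with rfl | h
    · simp
    · exact iterate_derivative_eq_zero ((natDegree_lt_iff_degree_lt h).mpr hq)
  rw [R, J_iter k q _ (fun j hj => vanish k j hj), hD]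
  simp [J]




lemma expand1 (k : ℕ) : ∃ h : Polynomial ℝ,
    (X^2 - 1 : Polynomial ℝ)^k = C ((2:ℝ)^k) * (X - C 1)^k
      + C ((k:ℝ) * 2^(k-1)) * (X - C 1)^(k+1) + (X - C 1)^(k+2) * h := by
  set p : Polynomial ℝ := (X + C 1)^k - C (2^k) - C ((k : ℝ) * 2^(k-1)) * (X - C 1) with hp
  have h1 : p.eval 1 = 0 := by simp [hp]; norm_num
  obtain ⟨q, hq⟩ := (dvd_iff_isRoot.mpr h1)
  have h2 : q.eval 1 = 0 := by
    have hd : derivative p = C (k : ℝ) * (X + C 1)^(k-1) - C ((k:ℝ) * 2^(k-1)) := by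
      simp [hp, derivative_pow]
    have hd2 : derivative p = q + (X - C 1) * derivative q := by
      rw [hq, derivative_mul]
      simp
    have heq := hd2.symm.trans hd
    have := congrArg (fun r => r.eval 1) heq
    simp at this
    rw [this]; norm_num
  obtain ⟨r, hr⟩ := (dvd_iff_isRoot.mpr h2)
  refine ⟨r, ?_⟩
  have key : (X^2 - 1 : Polynomial ℝ)^k = (X - C 1)^k * (X + C 1)^k := by
    rw [← mul_pow]
    congr 1
    simp only [C_1]
    ring
  have hx : (X + C 1 : Polynomial ℝ)^k = C ((2:ℝ)^k) + C ((k:ℝ) * 2^(k-1)) * (X - C 1)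
      + (X - C 1)^2 * r := by
    have h3 : p = (X - C 1) * ((X - C 1) * r) := by rw [hq, hr]
    rw [hp] at h3
    linear_combination h3
  rw [key, hx]
  simp only [pow_succ]
  ring





lemma iter_add (k : ℕ) (p q : Polynomial ℝ) :
    derivative^[k] (p + q) = derivative^[k] p + derivative^[k] q := by
  induction k generalizing p q with
  | zero => simp
  | succ k ih => simp [Function.iterate_succ_apply, derivative_add, ih]

lemma Rval1 (k : ℕ) : (R k).eval 1 = 2^k * k.factorial := by
  obtain ⟨h, hh⟩ := expand1 k
  rw [show k+2 = 2+k from by omega] at hh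
  obtain ⟨u, hu⟩ := dvd_iter 1 k 2 h
  rw [R, hh, iter_add, iter_add, iterate_derivative_C_mul, iterate_derivative_C_mul,
    iterate_derivative_X_sub_pow, iterate_derivative_X_sub_pow, hu]
  simp [Nat.descFactorial_self, nsmul_eq_mul]

lemma Rdval1 (k : ℕ) : (derivative (R k)).eval 1 = (k:ℝ) * 2^(k-1) * (k+1).factorial := by
  have hR : derivative (R k) = derivative^[k+1] ((X^2 - 1)^k) := by
    exact (Function.iterate_succ_apply' derivative k _).symm
  obtain ⟨h, hh⟩ := expand1 k
  rw [show k+2 = 1+(k+1) from by omega] at hh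
  obtain ⟨u, hu⟩ := dvd_iter 1 (k+1) 1 h
  have hz : derivative^[k+1] ((X - C 1 : Polynomial ℝ)^k) = 0 := by
    rw [iterate_derivative_X_sub_pow]
    rw [Nat.descFactorial_eq_zero_iff_lt.mpr (Nat.lt_succ_self k)]
    simp
  rw [hR, hh, iter_add, iter_add, iterate_derivative_C_mul, iterate_derivative_C_mul,
    hz, iterate_derivative_X_sub_pow, hu]
  simp [Nat.descFactorial_self, nsmul_eq_mul]
  left
  rw [Nat.descFactorial_eq_factorial_mul_choose, Nat.choose_succ_self_right,
    Nat.factorial_succ]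
  ring



lemma comp_negX (p : Polynomial ℝ) :
    derivative (p.comp (-X)) = -((derivative p).comp (-X)) := by
  rw [derivative_comp]
  simp

lemma iter_comp (j : ℕ) (p : Polynomial ℝ) :
    derivative^[j] (p.comp (-X)) = C ((-1:ℝ)^j) * ((derivative^[j] p).comp (-X)) := by
  induction j generalizing p with
  | zero => simp
  | succ j ih =>
    rw [Function.iterate_succ_apply, comp_negX, iterate_derivative_neg, ih,
      ← Function.iterate_succ_apply]
    rw [pow_succ]
    simp

lemma gcomp (k : ℕ) : ((X^2 - 1 : Polynomial ℝ)^k).comp (-X) = (X^2-1)^k := by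
  rw [pow_comp, sub_comp, pow_comp, X_comp, one_comp]
  ring_nf

lemma RevalNeg_aux (j k : ℕ) : (derivative^[j] ((X^2-1 : Polynomial ℝ)^k)).eval (-1)
    = (-1)^j * (derivative^[j] ((X^2-1 : Polynomial ℝ)^k)).eval 1 := by
  have h := iter_comp j ((X^2 - 1 : Polynomial ℝ)^k)
  rw [gcomp] at h
  have h2 := congrArg (fun p => p.eval 1) h
  simp only [eval_mul, eval_C, eval_comp, eval_neg, eval_X] at h2
  rw [h2, ← mul_assoc, ← mul_pow]
  simp

lemma RvalNeg (k : ℕ) : (R k).eval (-1) = (-1)^k * (R k).eval 1 := RevalNeg_aux k k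

lemma RdvalNeg (k : ℕ) :
    (derivative (R k)).eval (-1) = (-1)^(k+1) * (derivative (R k)).eval 1 := by
  have hR : derivative (R k) = derivative^[k+1] ((X^2 - 1)^k) :=
    (Function.iterate_succ_apply' derivative k _).symm
  rw [hR]; exact RevalNeg_aux (k+1) k




lemma J_sub (p q : Polynomial ℝ) : J (p - q) = J p - J q := by
  have h1 : p - q + q = p := by ring
  have := J_add (p - q) q
  rw [h1] at this
  linarith

-- degree facts
lemma gdeg (k : ℕ) : ((X^2 - 1 : Polynomial ℝ)^k).natDegree = 2*k := by
  have h : (X^2 - 1 : Polynomial ℝ) = X^2 - C 1 := by simp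
  rw [h, natDegree_pow, natDegree_X_pow_sub_C]
  ring

lemma gmonic (k : ℕ) : ((X^2 - 1 : Polynomial ℝ)^k).Monic := by
  have h : (X^2 - 1 : Polynomial ℝ) = X^2 - C 1 := by simp
  rw [h]
  exact (monic_X_pow_sub_C 1 (by norm_num)).pow k

lemma Rnatdeg (k : ℕ) : (R k).natDegree ≤ k := by
  have := natDegree_iterate_derivative ((X^2 - 1 : Polynomial ℝ)^k) k
  rw [gdeg] at this
  rw [R]
  exact this.trans (by omega)

lemma Rcoeff (k : ℕ) : (R k).coeff k = ((2*k).descFactorial k : ℝ) := by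
  rw [R, coeff_iterate_derivative]
  have h2 : k + k = 2*k := by ring
  rw [h2, ← gdeg k, (gmonic k).coeff_natDegree]
  simp

lemma Rdeg (k : ℕ) : (R k).degree = k := by
  have hne : (R k).coeff k ≠ 0 := by
    rw [Rcoeff]
    have : (2*k).descFactorial k ≠ 0 := by
      rw [Ne, Nat.descFactorial_eq_zero_iff_lt]
      omega
    exact_mod_cast this
  have h1 : k ≤ (R k).natDegree := le_natDegree_of_ne_zero hne
  have h2 := Rnatdeg k
  have h3 : (R k).natDegree = k := le_antisymm h2 h1
  have hR0 : R k ≠ 0 := fun h => hne (by simp [h])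
  rw [degree_eq_natDegree hR0, h3]

lemma Rne (k : ℕ) : R k ≠ 0 := fun h => by
  have := Rdeg k
  rw [h, degree_zero] at this
  exact (WithBot.bot_ne_coe) this

lemma D2k (k : ℕ) : derivative^[2*k] ((X^2 - 1 : Polynomial ℝ)^k)
    = C (((2*k).factorial : ℝ)) := by
  have hdeg : (derivative^[2*k] ((X^2 - 1 : Polynomial ℝ)^k)).natDegree ≤ 0 := by
    have := natDegree_iterate_derivative ((X^2 - 1 : Polynomial ℝ)^k) (2*k)
    rw [gdeg] at this
    omega
  rw [eq_C_of_natDegree_le_zero hdeg, coeff_iterate_derivative]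
  congr 1
  rw [Nat.zero_add, ← gdeg k, (gmonic k).coeff_natDegree, gdeg]
  simp [Nat.descFactorial_self]

noncomputable def Ikp (k : ℕ) : ℝ := J ((1 - X^2 : Polynomial ℝ)^k)

lemma Nk (k : ℕ) : J (R k * R k) = ((2*k).factorial : ℝ) * Ikp k := by
  have h1 : J (R k * R k) = (-1:ℝ)^k * J (derivative^[k] (R k) * (X^2-1)^k) := by
    conv_lhs => rw [show R k * R k = R k * derivative^[k] ((X^2-1)^k) from rfl]
    exact J_iter k (R k) _ (fun j hj => vanish k j hj)
  have h2 : derivative^[k] (R k) = C (((2*k).factorial : ℝ)) := by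
    rw [R, ← Function.iterate_add_apply, show k + k = 2*k from by ring]
    exact D2k k
  have h3 : (X^2 - 1 : Polynomial ℝ)^k = C ((-1:ℝ)^k) * (1 - X^2)^k := by
    rw [map_pow, map_neg, map_one,
      show (X^2 - 1 : Polynomial ℝ) = -(1-X^2) from by ring, neg_pow]
  rw [h1, h2, h3, ← mul_assoc, ← C_mul, J_smul]
  have hs : ((-1:ℝ)^k)*((-1)^k) = 1 := by rw [← mul_pow]; norm_num
  unfold Ikp
  linear_combination (((2*k).factorial:ℝ)) * (J ((1 - X^2 : Polynomial ℝ)^k)) * hs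

lemma Ikp_zero : Ikp 0 = 2 := by
  simp [Ikp, J]
  norm_num

lemma Ikp_succ (k : ℕ) : (2*(k:ℝ)+3) * Ikp (k+1) = (2*(k:ℝ)+2) * Ikp k := by
  have hd : derivative (X * (1 - X^2 : Polynomial ℝ)^(k+1)) =
      C (2*(k:ℝ)+3) * (1 - X^2)^(k+1) - C (2*(k:ℝ)+2) * (1 - X^2)^k := by
    rw [derivative_mul, derivative_X, derivative_pow]
    simp only [Nat.add_sub_cancel, derivative_sub, derivative_one, derivative_X_pow]
    push_cast
    simp only [pow_succ, map_add, map_one, map_mul, map_ofNat]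
    ring
  have h0 := J_ftc (X * (1 - X^2 : Polynomial ℝ)^(k+1))
  rw [hd] at h0
  rw [J_sub, J_smul, J_smul] at h0
  simp only [eval_mul, eval_X, eval_pow, eval_sub, eval_one] at h0
  norm_num at h0
  unfold Ikp
  linarith

lemma Ikp_closed (k : ℕ) : Ikp k * ((2*k+1).factorial : ℝ) = 2 * 4^k * (k.factorial:ℝ)^2 := by
  induction k with
  | zero => simp [Ikp_zero]
  | succ k ih =>
    have hrec := Ikp_succ k
    have hfac : ((2*(k+1)+1).factorial : ℝ)
        = (2*(k:ℝ)+3) * ((2*(k:ℝ)+2) * ((2*k+1).factorial : ℝ)) := by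
      rw [show 2*(k+1)+1 = ((2*k+1)+1)+1 from by ring, Nat.factorial_succ, Nat.factorial_succ]
      push_cast
      ring
    have hk1 : (((k+1)).factorial:ℝ) = ((k:ℝ)+1) * (k.factorial:ℝ) := by
      rw [Nat.factorial_succ]; push_cast; ring
    rw [hfac, hk1, pow_succ]
    linear_combination (2*(k:ℝ)+2) * ((2*k+1).factorial : ℝ) * hrec + (2*(k:ℝ)+2)^2 * ih

lemma Ikp_pos (k : ℕ) : 0 < Ikp k := by
  have h := Ikp_closed k
  have h1 : (0:ℝ) < ((2*k+1).factorial : ℝ) := by positivity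
  have h2 : (0:ℝ) < 2 * 4^k * (k.factorial:ℝ)^2 := by positivity
  nlinarith

lemma Dk (k : ℕ) : J (derivative (R k) * derivative (R k))
    = (k:ℝ) * 4^k * k.factorial * (k+1).factorial := by
  have h1 := J_ibp (derivative (R k)) (R k)
  have horth : J (derivative (derivative (R k)) * R k) = 0 := by
    apply orth
    calc (derivative (derivative (R k))).degree ≤ (derivative (R k)).degree :=
          degree_derivative_le
      _ < (R k).degree := degree_derivative_lt (Rne k)
      _ = k := Rdeg k
  rw [horth, RdvalNeg, RvalNeg] at h1
  have hsign : ((-1:ℝ)^(k+1) * (derivative (R k)).eval 1) * ((-1:ℝ)^k * (R k).eval 1)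
      = -((derivative (R k)).eval 1 * (R k).eval 1) := by
    have hs : ((-1:ℝ)^k)*((-1)^k) = 1 := by rw [← mul_pow]; norm_num
    rw [pow_succ]
    linear_combination (-(eval 1 (derivative (R k)) * eval 1 (R k))) * hs
  rw [hsign] at h1
  rw [h1, Rdval1, Rval1]
  rcases Nat.eq_zero_or_pos k with rfl | hk
  · norm_num
  · obtain ⟨m, rfl⟩ := Nat.exists_eq_add_of_le hk
    rw [show 1+m-1 = m from by omega]
    have h4 : (4:ℝ)^(1+m) = 2^(1+m) * 2^(1+m) := by
      rw [← mul_pow]; norm_num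
    rw [h4]
    push_cast
    ring




lemma J_zero : J 0 = 0 := by simp [J]

lemma J_sum {α : Type*} (s : Finset α) (f : α → Polynomial ℝ) :
    J (∑ i ∈ s, f i) = ∑ i ∈ s, J (f i) := by
  classical
  induction s using Finset.induction_on with
  | empty => simp [J_zero]
  | @insert _ _ h ih => rw [Finset.sum_insert h, J_add, ih, Finset.sum_insert h]

lemma J_mono (p q : Polynomial ℝ) (h : ∀ x ∈ Set.Icc (-1:ℝ) 1, p.eval x ≤ q.eval x) :
    J p ≤ J q := by
  apply intervalIntegral.integral_mono_on (by norm_num) (intInt p) (intInt q)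
  intro x hx
  exact h x (by simpa using hx)

lemma J_sq_nonneg (p : Polynomial ℝ) : 0 ≤ J (p * p) := by
  rw [J]
  apply intervalIntegral.integral_nonneg (by norm_num)
  intro x _
  simp only [eval_mul]
  exact mul_self_nonneg _

lemma orth' (j k : ℕ) (h : j ≠ k) : J (R j * R k) = 0 := by
  rcases h.lt_or_gt with h1 | h1
  · exact orth k (R j) (by rw [Rdeg]; exact_mod_cast h1)
  · rw [mul_comm]
    exact orth j (R k) (by rw [Rdeg]; exact_mod_cast h1)

lemma Rcoeff_ne (k : ℕ) : (R k).coeff k ≠ 0 := by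
  rw [Rcoeff]
  have : (2*k).descFactorial k ≠ 0 := by
    rw [Ne, Nat.descFactorial_eq_zero_iff_lt]; omega
  exact_mod_cast this

lemma decomp : ∀ (n : ℕ) (P : Polynomial ℝ), P.degree ≤ n →
    ∃ c : ℕ → ℝ, P = ∑ k ∈ Finset.range (n+1), C (c k) * R k := by
  intro n
  induction n with
  | zero =>
    intro P hdeg
    refine ⟨fun _ => P.coeff 0, ?_⟩
    rw [eq_C_of_degree_le_zero hdeg]
    simp [R]
  | succ n ih =>
    intro P hdeg
    set a := P.coeff (n+1) / (R (n+1)).coeff (n+1) with ha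
    set Q := P - C a * R (n+1) with hQ
    have hQc : Q.coeff (n+1) = 0 := by
      rw [hQ, coeff_sub, coeff_C_mul, ha, div_mul_cancel₀ _ (Rcoeff_ne (n+1))]
      ring
    have hQdeg : Q.degree ≤ n := by
      rw [degree_le_iff_coeff_zero]
      intro m hm
      have hm' : n < m := by exact_mod_cast hm
      rcases eq_or_lt_of_le (Nat.succ_le_of_lt hm') with h1 | h1
      · rw [← h1]; exact hQc
      · rw [hQ, coeff_sub, coeff_C_mul]
        rw [coeff_eq_zero_of_degree_lt (lt_of_le_of_lt hdeg (by exact_mod_cast h1)),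
          coeff_eq_zero_of_degree_lt (by rw [Rdeg]; exact_mod_cast h1)]
        ring
    obtain ⟨c, hc⟩ := ih Q hQdeg
    refine ⟨fun k => if k = n+1 then a else c k, ?_⟩
    rw [Finset.sum_range_succ]
    simp only [reduceIte]
    have hsum : ∑ k ∈ Finset.range (n+1), C (if k = n+1 then a else c k) * R k
        = ∑ k ∈ Finset.range (n+1), C (c k) * R k := by
      apply Finset.sum_congr rfl
      intro k hk
      rw [if_neg (by have := Finset.mem_range.mp hk; omega)]
    rw [hsum, ← hc, hQ]
    ring

lemma parseval (m : ℕ) (c : ℕ → ℝ) :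
    J ((∑ k ∈ Finset.range m, C (c k) * R k) * (∑ k ∈ Finset.range m, C (c k) * R k))
    = ∑ k ∈ Finset.range m, (c k)^2 * J (R k * R k) := by
  rw [Finset.sum_mul_sum, J_sum]
  have h1 : ∀ j ∈ Finset.range m,
      J (∑ k ∈ Finset.range m, (C (c j) * R j) * (C (c k) * R k))
      = (c j)^2 * J (R j * R j) := by
    intro j hj
    rw [J_sum]
    rw [Finset.sum_eq_single j]
    · have : (C (c j) * R j) * (C (c j) * R j) = C ((c j)^2) * (R j * R j) := by
        rw [show ((c j)^2) = (c j) * (c j) from sq (c j) ▸ rfl, C_mul]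
        ring
      rw [this, J_smul]
    · intro k _ hk
      have : (C (c j) * R j) * (C (c k) * R k) = C ((c j) * (c k)) * (R j * R k) := by
        rw [C_mul]; ring
      rw [this, J_smul, orth' j k (Ne.symm hk), mul_zero]
    · intro h
      exact absurd hj h
  exact Finset.sum_congr rfl h1




lemma Nk_closed (k : ℕ) :
    J (R k * R k) * (2*(k:ℝ)+1) = 2 * 4^k * ((k.factorial:ℝ))^2 := by
  have h1 := Ikp_closed k
  have h2 : ((2*k+1).factorial : ℝ) = (2*(k:ℝ)+1) * ((2*k).factorial : ℝ) := by
    rw [Nat.factorial_succ]; push_cast; ring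
  rw [Nk]
  rw [h2] at h1
  linarith [h1]

lemma natineq (n k : ℕ) (hk : k ≤ n) : n*(k*((k+1)*(2*k+1))) ≤ 6*n^4 := by
  rcases Nat.eq_zero_or_pos n with rfl | hn
  · have : k = 0 := by omega
    simp [this]
  · have h2 : (n+1)*(2*n+1) ≤ 6*n^2 := by nlinarith [hn]
    calc n*(k*((k+1)*(2*k+1))) ≤ n*(n*((n+1)*(2*n+1))) :=
          Nat.mul_le_mul_left _ (Nat.mul_le_mul hk (Nat.mul_le_mul (by omega) (by omega)))
      _ ≤ n*(n*(6*n^2)) := Nat.mul_le_mul_left _ (Nat.mul_le_mul_left _ h2)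
      _ = 6*n^4 := by ring

lemma perk (n k : ℕ) (hk : k ≤ n) :
    (n:ℝ) * J (derivative (R k) * derivative (R k)) ≤ 3*(n:ℝ)^4 * J (R k * R k) := by
  have hN := Nk_closed k
  have hreal : (n:ℝ)*((k:ℝ)*(((k:ℝ)+1)*(2*(k:ℝ)+1))) ≤ 6*(n:ℝ)^4 := by
    exact_mod_cast natineq n k hk
  have hfac1 : ((k+1).factorial:ℝ) = ((k:ℝ)+1)*(k.factorial:ℝ) := by
    rw [Nat.factorial_succ]; push_cast; ring
  have hpos : (0:ℝ) < 2*(k:ℝ)+1 := by positivity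
  have h2 : J (R k * R k) = 2*4^k*((k.factorial:ℝ))^2 / (2*(k:ℝ)+1) := by
    rw [eq_div_iff hpos.ne']
    exact hN
  rw [Dk, h2, hfac1, ← mul_div_assoc, le_div_iff₀ hpos]
  nlinarith [mul_le_mul_of_nonneg_right hreal
    (show (0:ℝ) ≤ 4^k*((k.factorial:ℝ))^2 by positivity)]

lemma R0 : R 0 = 1 := by simp [R]

end L2Inv

open L2Inv

/-- **`L²` inverse inequality.** If `P` is a real polynomial of degree at most `n`, then
`‖P'‖_{L²([-1,1])} ≤ √3 · n² · ‖P‖_{L²([-1,1])}`. -/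
theorem l2_inverse_inequality (n : ℕ) (P : Polynomial ℝ) (hP : P.degree ≤ n) :
    Real.sqrt (∫ x in Icc (-1 : ℝ) 1, (P.derivative.eval x) ^ 2) ≤
      Real.sqrt 3 * (n : ℝ) ^ 2 * Real.sqrt (∫ x in Icc (-1 : ℝ) 1, (P.eval x) ^ 2) := by
  have cv : ∀ q : Polynomial ℝ,
      (∫ x in Icc (-1 : ℝ) 1, (q.eval x) ^ 2) = J (q * q) := by
    intro q
    rw [MeasureTheory.integral_Icc_eq_integral_Ioc,
      ← intervalIntegral.integral_of_le (by norm_num : (-1:ℝ) ≤ 1), J]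
    congr 1
    funext x
    simp [eval_mul, sq]
  obtain ⟨c, hc⟩ := decomp n P hP
  have hd : derivative P = ∑ k ∈ Finset.range (n+1), C (c k) * derivative (R k) := by
    rw [hc, derivative_sum]
    exact Finset.sum_congr rfl (fun k _ => derivative_C_mul _ _)
  -- pointwise Cauchy-Schwarz bound
  have hpt : ∀ x ∈ Set.Icc (-1:ℝ) 1, (derivative P * derivative P).eval x ≤
      (C ((n:ℝ)) * ∑ k ∈ Finset.range (n+1), (C (c k) * derivative (R k))^2).eval x := by
    intro x _
    rw [eval_mul, hd]
    simp only [eval_finset_sum, eval_mul, eval_C, eval_pow]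
    set f : ℕ → ℝ := fun k => c k * (derivative (R k)).eval x with hf
    have hf0 : f 0 = 0 := by simp [hf, R0]
    have hsplit : ∑ k ∈ Finset.range (n+1), f k = ∑ k ∈ Finset.Ico 1 (n+1), f k := by
      rw [Finset.range_eq_Ico, Finset.sum_eq_sum_Ico_succ_bot (by omega), hf0, zero_add]
    rw [← sq, hsplit]
    have hcs := sq_sum_le_card_mul_sum_sq (s := Finset.Ico 1 (n+1)) (f := f)
    rw [Nat.card_Ico] at hcs
    simp only [Nat.add_sub_cancel] at hcs
    calc (∑ k ∈ Finset.Ico 1 (n+1), f k)^2 ≤ (n:ℝ) * ∑ k ∈ Finset.Ico 1 (n+1), f k ^2 := hcs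
      _ ≤ (n:ℝ) * ∑ k ∈ Finset.range (n+1), f k ^2 := by
          apply mul_le_mul_of_nonneg_left _ (Nat.cast_nonneg n)
          apply Finset.sum_le_sum_of_subset_of_nonneg
          · rw [Finset.range_eq_Ico]
            exact Finset.Ico_subset_Ico (by omega) le_rfl
          · intro k _ _
            exact sq_nonneg _
  have step1 : J (derivative P * derivative P) ≤
      (n:ℝ) * ∑ k ∈ Finset.range (n+1), (c k)^2 * J (derivative (R k) * derivative (R k)) := by
    have := J_mono _ _ hpt
    rw [J_smul, J_sum] at this
    have hsq : ∀ k, J ((C (c k) * derivative (R k))^2)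
        = (c k)^2 * J (derivative (R k) * derivative (R k)) := by
      intro k
      have : (C (c k) * derivative (R k))^2 = C ((c k)^2) * (derivative (R k) * derivative (R k)) := by
        rw [map_pow]
        ring
      rw [this, J_smul]
    simp_rw [hsq] at this
    exact this
  have step2 : (n:ℝ) * ∑ k ∈ Finset.range (n+1), (c k)^2 * J (derivative (R k) * derivative (R k))
      ≤ 3*(n:ℝ)^4 * ∑ k ∈ Finset.range (n+1), (c k)^2 * J (R k * R k) := by
    rw [Finset.mul_sum, Finset.mul_sum]
    apply Finset.sum_le_sum
    intro k hk
    have hkn : k ≤ n := by have := Finset.mem_range.mp hk; omega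
    have h1 := perk n k hkn
    have h2 := mul_le_mul_of_nonneg_left h1 (sq_nonneg (c k))
    calc (n:ℝ) * ((c k)^2 * J (derivative (R k) * derivative (R k)))
        = (c k)^2 * ((n:ℝ) * J (derivative (R k) * derivative (R k))) := by ring
      _ ≤ (c k)^2 * (3*(n:ℝ)^4 * J (R k * R k)) := h2
      _ = 3*(n:ℝ)^4 * ((c k)^2 * J (R k * R k)) := by ring
  have step3 : ∑ k ∈ Finset.range (n+1), (c k)^2 * J (R k * R k) = J (P * P) := by
    rw [hc, parseval]
  have main : J (derivative P * derivative P) ≤ 3*(n:ℝ)^4 * J (P * P) := by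
    rw [← step3]
    exact step1.trans step2
  rw [cv P.derivative, cv P]
  calc Real.sqrt (J (derivative P * derivative P)) ≤ Real.sqrt (3*(n:ℝ)^4 * J (P * P)) :=
        Real.sqrt_le_sqrt main
    _ = Real.sqrt 3 * (n : ℝ) ^ 2 * Real.sqrt (J (P * P)) := by
        rw [Real.sqrt_mul (by positivity) (J (P*P)), Real.sqrt_mul (by norm_num : (0:ℝ) ≤ 3)]
        congr 2
        rw [show (n:ℝ)^4 = ((n:ℝ)^2)^2 from by ring, Real.sqrt_sq (by positivity)]
end
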